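/- Converse Frobenius: if a fibration p : C → B has fiberwise exponentials and stable fiberwise products, and a morphism f : A → B admits, for every P in the fiber over A, a cocartesian lift with domain P satisfying Frobenius reciprocity, then exponential diagrams in the fiber over B are stable under pullback along f. -/

import Mathlib

open CategoryTheory CategoryTheory.Limits CategoryTheory.Functor

namespace FOHL

variable {𝒮 : Type*} {𝒳 : Type*} [Category 𝒮] [Category 𝒳]

variable (p : 𝒳 ⥤ 𝒮)

/-- A binary product diagram in the fiber of `p` over `S`. -/
structure IsFiberProductFan (S : 𝒮) {P Q T : 𝒳} (π₁ : T ⟶ P) (π₂ : T ⟶ Q) : Prop where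
  lift₁ : p.IsHomLift (𝟙 S) π₁
  lift₂ : p.IsHomLift (𝟙 S) π₂
  universal : ∀ {X : 𝒳} (u : X ⟶ P) (v : X ⟶ Q),
    p.IsHomLift (𝟙 S) u → p.IsHomLift (𝟙 S) v →
      ∃! w : X ⟶ T, p.IsHomLift (𝟙 S) w ∧ w ≫ π₁ = u ∧ w ≫ π₂ = v

/-- A binary coproduct diagram in the fiber of `p` over `S`. -/
structure IsFiberCoproductCofan (S : 𝒮) {P Q T : 𝒳} (ι₁ : P ⟶ T) (ι₂ : Q ⟶ T) : Prop where
  lift₁ : p.IsHomLift (𝟙 S) ι₁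
  lift₂ : p.IsHomLift (𝟙 S) ι₂
  universal : ∀ {X : 𝒳} (u : P ⟶ X) (v : Q ⟶ X),
    p.IsHomLift (𝟙 S) u → p.IsHomLift (𝟙 S) v →
      ∃! w : T ⟶ X, p.IsHomLift (𝟙 S) w ∧ ι₁ ≫ w = u ∧ ι₂ ≫ w = v

/-- A terminal object of the fiber of `p` over `S`. -/
structure IsFiberTerminal (S : 𝒮) (T : 𝒳) : Prop where
  over_eq : p.obj T = S
  universal : ∀ X : 𝒳, p.obj X = S → ∃! u : X ⟶ T, p.IsHomLift (𝟙 S) u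

/-- An initial object of the fiber of `p` over `S`. -/
structure IsFiberInitial (S : 𝒮) (T : 𝒳) : Prop where
  over_eq : p.obj T = S
  universal : ∀ X : 𝒳, p.obj X = S → ∃! u : T ⟶ X, p.IsHomLift (𝟙 S) u

/-- An exponential diagram in the fiber of `p` over `S`: `E` is the exponential `P ⟹ Q`,
`π₁ : W ⟶ E`, `π₂ : W ⟶ P` is a product fan exhibiting `W = E ∧ P`, and `ev : W ⟶ Q` is the
evaluation morphism. -/
structure IsFiberExponential (S : 𝒮) {P Q E W : 𝒳}
    (π₁ : W ⟶ E) (π₂ : W ⟶ P) (ev : W ⟶ Q) : Prop where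
  fan : IsFiberProductFan p S π₁ π₂
  ev_lift : p.IsHomLift (𝟙 S) ev
  universal : ∀ {X V : 𝒳} (ρ₁ : V ⟶ X) (ρ₂ : V ⟶ P), IsFiberProductFan p S ρ₁ ρ₂ →
    ∀ g : V ⟶ Q, p.IsHomLift (𝟙 S) g →
      ∃! h : X ⟶ E, p.IsHomLift (𝟙 S) h ∧
        ∀ m : V ⟶ W, p.IsHomLift (𝟙 S) m → m ≫ π₁ = ρ₁ ≫ h → m ≫ π₂ = ρ₂ →
          m ≫ ev = g

/-- Stability of fiberwise binary product diagrams under pullback along `f`. -/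
def ProductsStableAlong {R S : 𝒮} (f : R ⟶ S) : Prop :=
  ∀ {P Q T P' Q' T' : 𝒳} (π₁ : T ⟶ P) (π₂ : T ⟶ Q)
    (π₁' : T' ⟶ P') (π₂' : T' ⟶ Q') (cP : P' ⟶ P) (cQ : Q' ⟶ Q) (cT : T' ⟶ T),
    IsFiberProductFan p S π₁ π₂ →
    p.IsStronglyCartesian f cP → p.IsStronglyCartesian f cQ → p.IsStronglyCartesian f cT →
    p.IsHomLift (𝟙 R) π₁' → p.IsHomLift (𝟙 R) π₂' →
    π₁' ≫ cP = cT ≫ π₁ → π₂' ≫ cQ = cT ≫ π₂ →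
    IsFiberProductFan p R π₁' π₂'

/-- Stability of fiberwise binary coproduct diagrams under pullback along `f`. -/
def CoproductsStableAlong {R S : 𝒮} (f : R ⟶ S) : Prop :=
  ∀ {P Q T P' Q' T' : 𝒳} (ι₁ : P ⟶ T) (ι₂ : Q ⟶ T)
    (ι₁' : P' ⟶ T') (ι₂' : Q' ⟶ T') (cP : P' ⟶ P) (cQ : Q' ⟶ Q) (cT : T' ⟶ T),
    IsFiberCoproductCofan p S ι₁ ι₂ →
    p.IsStronglyCartesian f cP → p.IsStronglyCartesian f cQ → p.IsStronglyCartesian f cT →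
    p.IsHomLift (𝟙 R) ι₁' → p.IsHomLift (𝟙 R) ι₂' →
    ι₁' ≫ cT = cP ≫ ι₁ → ι₂' ≫ cT = cQ ≫ ι₂ →
    IsFiberCoproductCofan p R ι₁' ι₂'

/-- Stability of fiberwise exponential diagrams under pullback along `f`. -/
def ExponentialsStableAlong {R S : 𝒮} (f : R ⟶ S) : Prop :=
  ∀ {P Q E W P' Q' E' W' : 𝒳} (π₁ : W ⟶ E) (π₂ : W ⟶ P) (ev : W ⟶ Q)
    (π₁' : W' ⟶ E') (π₂' : W' ⟶ P') (ev' : W' ⟶ Q')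
    (cE : E' ⟶ E) (cP : P' ⟶ P) (cQ : Q' ⟶ Q) (cW : W' ⟶ W),
    IsFiberExponential p S π₁ π₂ ev →
    p.IsStronglyCartesian f cE → p.IsStronglyCartesian f cP →
    p.IsStronglyCartesian f cQ → p.IsStronglyCartesian f cW →
    p.IsHomLift (𝟙 R) π₁' → p.IsHomLift (𝟙 R) π₂' → p.IsHomLift (𝟙 R) ev' →
    π₁' ≫ cE = cW ≫ π₁ → π₂' ≫ cP = cW ≫ π₂ → ev' ≫ cQ = cW ≫ ev →
    IsFiberExponential p R π₁' π₂' ev'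

/-- A `Π`-diagram over `f : R ⟶ S` based on `P` (with `P` in the fiber over `R`): a cartesian
morphism `c : X ⟶ Y` over `f` (so `X = f*Y`, `Y = Π_f P`) and a vertical evaluation morphism
`ε : X ⟶ P` which is universal: for every cartesian `c' : X' ⟶ Y'` over `f` and vertical
`u : X' ⟶ P` there is a unique vertical `v : Y' ⟶ Y` whose pullback composed with `ε` is `u`. -/
structure IsPiDiagram {R S : 𝒮} (f : R ⟶ S) {P X Y : 𝒳} (c : X ⟶ Y) (ε : X ⟶ P) : Prop where
  cart : p.IsStronglyCartesian f c
  vert : p.IsHomLift (𝟙 R) ε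
  universal : ∀ {X' Y' : 𝒳} (c' : X' ⟶ Y'), p.IsStronglyCartesian f c' →
    ∀ u : X' ⟶ P, p.IsHomLift (𝟙 R) u →
      ∃! v : Y' ⟶ Y, p.IsHomLift (𝟙 S) v ∧
        ∀ w : X' ⟶ X, p.IsHomLift (𝟙 R) w → w ≫ c = c' ≫ v → w ≫ ε = u

/-- The Beck–Chevalley condition: stability of a `Π`-diagram over `g : Cc ⟶ D` along
`k : Bb ⟶ D`.  For every pullback square and every pullback of the diagram along the square,
the resulting diagram is again a `Π`-diagram. -/
def PiDiagramStableAlong {Cc D : 𝒮} (g : Cc ⟶ D) {P X Y : 𝒳} (c : X ⟶ Y) (ε : X ⟶ P)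
    {Bb : 𝒮} (k : Bb ⟶ D) : Prop :=
  ∀ {A : 𝒮} (f : A ⟶ Bb) (h : A ⟶ Cc), IsPullback f h k g →
    ∀ {P' X' Y' : 𝒳} (cP : P' ⟶ P) (cX : X' ⟶ X) (cY : Y' ⟶ Y)
      (q : X' ⟶ Y') (ε' : X' ⟶ P'),
      p.IsStronglyCartesian h cP → p.IsStronglyCartesian h cX → p.IsStronglyCartesian k cY →
      p.IsHomLift f q → q ≫ cY = cX ≫ c →
      p.IsHomLift (𝟙 A) ε' → ε' ≫ cP = cX ≫ ε →
      IsPiDiagram p f q ε'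

/-- Stability of a cocartesian lift `t : P ⟶ Z` of `g : Cc ⟶ D` along `k : Bb ⟶ D`:
for every pullback square, the induced comparison morphism between the pullbacks is again
cocartesian. -/
def CocartesianStableAlong {Cc D : 𝒮} (g : Cc ⟶ D) {P Z : 𝒳} (t : P ⟶ Z)
    {Bb : 𝒮} (k : Bb ⟶ D) : Prop :=
  ∀ {A : 𝒮} (f : A ⟶ Bb) (h : A ⟶ Cc), IsPullback f h k g →
    ∀ {P' Z' : 𝒳} (cP : P' ⟶ P) (cZ : Z' ⟶ Z) (m : P' ⟶ Z'),
      p.IsStronglyCartesian h cP → p.IsStronglyCartesian k cZ →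
      p.IsHomLift f m → m ≫ cZ = cP ≫ t →
      p.IsStronglyCocartesian f m

end FOHL

open CategoryTheory CategoryTheory.Functor FOHL

/-- A cocartesian lift `t : P ⟶ SfP` of `f` satisfies Frobenius reciprocity if, for every
cartesian lift `c : Qf ⟶ Q` of `f` and fiberwise product diagrams on `(P, Qf)` and
`(SfP, Q)`, the induced morphism `t ∧ c` over `f` between the products is cocartesian. -/
def SatisfiesFrobenius {𝒮 𝒳 : Type*} [Category 𝒮] [Category 𝒳] (p : 𝒳 ⥤ 𝒮)
    {R S : 𝒮} (f : R ⟶ S) {P SfP : 𝒳} (t : P ⟶ SfP) : Prop :=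
  ∀ {Q Qf T T' : 𝒳} (c : Qf ⟶ Q), p.IsStronglyCartesian f c →
    ∀ (π₁ : T ⟶ P) (π₂ : T ⟶ Qf), IsFiberProductFan p R π₁ π₂ →
    ∀ (ρ₁ : T' ⟶ SfP) (ρ₂ : T' ⟶ Q), IsFiberProductFan p S ρ₁ ρ₂ →
    ∀ m : T ⟶ T', p.IsHomLift f m → m ≫ ρ₁ = π₁ ≫ t → m ≫ ρ₂ = π₂ ≫ c →
      p.IsStronglyCocartesian f m

/-- converse Frobenius. If a fibration `p : 𝒳 ⥤ 𝒮` has fiberwise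
exponentials and stable fiberwise products, and `f : A ⟶ B` admits, for every `P` in the
fiber over `A`, a cocartesian lift with domain `P` satisfying Frobenius reciprocity, then
the exponential diagrams in the fiber over `B` are stable under pullback along `f`. -/
theorem exponentials_stable_of_frobenius
    {𝒮 𝒳 : Type*} [Category 𝒮] [Category 𝒳] (p : 𝒳 ⥤ 𝒮) [p.IsFibered]
    (hprod : ∀ (S : 𝒮) (P Q : 𝒳), p.obj P = S → p.obj Q = S →
      ∃ (T : 𝒳) (π₁ : T ⟶ P) (π₂ : T ⟶ Q), IsFiberProductFan p S π₁ π₂)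
    (hprodStable : ∀ {R S : 𝒮} (f : R ⟶ S), ProductsStableAlong p f)
    (hexp : ∀ (S : 𝒮) (P Q : 𝒳), p.obj P = S → p.obj Q = S →
      ∃ (E W : 𝒳) (π₁ : W ⟶ E) (π₂ : W ⟶ P) (ev : W ⟶ Q), IsFiberExponential p S π₁ π₂ ev)
    {A B : 𝒮} (f : A ⟶ B)
    (hcocart : ∀ P : 𝒳, p.obj P = A → ∃ (Z : 𝒳) (t : P ⟶ Z),
      p.IsStronglyCocartesian f t ∧ SatisfiesFrobenius p f t) :
    ExponentialsStableAlong p f := by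
  intro P Q E W P' Q' E' W' π₁ π₂ ev π₁' π₂' ev' cE cP cQ cW hExp hcE hcP hcQ hcW
    hπ₁' hπ₂' hev' wE wP wQ
  haveI := hcE; haveI := hcP; haveI := hcQ; haveI := hcW
  haveI := hπ₁'; haveI := hπ₂'; haveI := hev'
  haveI := hExp.fan.lift₁; haveI := hExp.fan.lift₂; haveI := hExp.ev_lift
  -- the pulled-back fan is a product fan over `A`
  have fan' : IsFiberProductFan p A π₁' π₂' :=
    hprodStable f π₁ π₂ π₁' π₂' cE cP cW hExp.fan hcE hcP hcW hπ₁' hπ₂' wE wP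
  refine ⟨fan', hev', ?_⟩
  intro X V ρ₁ ρ₂ hfanV g hg
  haveI := hfanV.lift₁; haveI := hfanV.lift₂; haveI := hg
  have hXA : p.obj X = A := IsHomLift.codomain_eq p (𝟙 A) ρ₁
  -- a cocartesian lift of `f` with domain `X`, satisfying Frobenius
  obtain ⟨Z, t, ht, hFrob⟩ := hcocart X hXA
  haveI := ht
  have hZB : p.obj Z = B := IsHomLift.codomain_eq p f t
  have hPB : p.obj P = B := IsHomLift.codomain_eq p f cP
  -- a product of `Z` and `P` in the fiber over `B`
  obtain ⟨U, σ₁, σ₂, hfanU⟩ := hprod B Z P hZB hPB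
  haveI := hfanU.lift₁; haveI := hfanU.lift₂
  -- cartesian lifts of `f` with codomains `Z` and `U`
  obtain ⟨Zf, cZ, hcZ⟩ := CategoryTheory.IsPreFibered.exists_isCartesian p hZB f
  haveI := hcZ
  have hUB : p.obj U = B := IsHomLift.domain_eq p (𝟙 B) σ₁
  obtain ⟨Uf, cU, hcU⟩ := CategoryTheory.IsPreFibered.exists_isCartesian p hUB f
  haveI := hcU
  -- `t` factors through `cZ` via a vertical map `ηX`
  obtain ⟨ηX, ⟨hηX, hηXfac⟩, -⟩ :=
    IsStronglyCartesian.universal_property p f cZ (𝟙 A) f (by simp) t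
  haveI := hηX
  -- pull back the fan `(σ₁, σ₂)` along `f`
  obtain ⟨σ₁', ⟨hσ₁', hσ₁'fac⟩, -⟩ :=
    IsStronglyCartesian.universal_property p f cZ (𝟙 A) f (by simp) (cU ≫ σ₁)
  obtain ⟨σ₂', ⟨hσ₂', hσ₂'fac⟩, -⟩ :=
    IsStronglyCartesian.universal_property p f cP (𝟙 A) f (by simp) (cU ≫ σ₂)
  haveI := hσ₁'; haveI := hσ₂'
  have fanUf : IsFiberProductFan p A σ₁' σ₂' :=
    hprodStable f σ₁ σ₂ σ₁' σ₂' cZ cP cU hfanU inferInstance hcP inferInstance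
      hσ₁' hσ₂' hσ₁'fac hσ₂'fac
  -- the comparison map `m : V ⟶ U` over `f`
  obtain ⟨m', ⟨hm', hm'1, hm'2⟩, -⟩ :=
    fanUf.universal (ρ₁ ≫ ηX) ρ₂ inferInstance inferInstance
  haveI := hm'
  set m : V ⟶ U := m' ≫ cU with hm_def
  haveI hm : p.IsHomLift f m := inferInstance
  have hmσ₁ : m ≫ σ₁ = ρ₁ ≫ t := by
    rw [hm_def, Category.assoc, ← hσ₁'fac, ← Category.assoc, hm'1, Category.assoc, hηXfac]
  have hmσ₂ : m ≫ σ₂ = ρ₂ ≫ cP := by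
    rw [hm_def, Category.assoc, ← hσ₂'fac, ← Category.assoc, hm'2]
  -- Frobenius: `m` is cocartesian
  have hmCocart : p.IsStronglyCocartesian f m :=
    hFrob cP hcP ρ₁ ρ₂ hfanV σ₁ σ₂ hfanU m hm hmσ₁ hmσ₂
  haveI := hmCocart
  -- transpose `g` along `m` to a vertical map `gb : U ⟶ Q`
  obtain ⟨gb, ⟨hgb, hgbfac⟩, -⟩ :=
    IsStronglyCocartesian.universal_property p f m (𝟙 B) f (by simp) (g ≫ cQ)
  haveI := hgb
  -- the exponential transpose `hb : Z ⟶ E` of `gb`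
  obtain ⟨hb, ⟨hhb, hhbprop⟩, hhbuniq⟩ := hExp.universal σ₁ σ₂ hfanU gb hgb
  haveI := hhb
  -- the desired map `h : X ⟶ E'`
  obtain ⟨h, ⟨hh, hhfac⟩, -⟩ :=
    IsStronglyCartesian.universal_property p f cE (𝟙 A) f (by simp) (t ≫ hb)
  haveI := hh
  -- key compatibility lemma
  have key : ∀ (h'' : X ⟶ E') (vb : Z ⟶ E) (mm : V ⟶ W') (n : U ⟶ W),
      p.IsHomLift (𝟙 A) h'' → p.IsHomLift (𝟙 B) vb → p.IsHomLift (𝟙 A) mm →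
      p.IsHomLift (𝟙 B) n → h'' ≫ cE = t ≫ vb → mm ≫ π₁' = ρ₁ ≫ h'' →
      mm ≫ π₂' = ρ₂ → n ≫ π₁ = σ₁ ≫ vb → n ≫ π₂ = σ₂ → mm ≫ cW = m ≫ n := by
    intro h'' vb mm n hh'' hvb hmm hn hfac hmm1 hmm2 hn1 hn2
    haveI := hh''; haveI := hvb; haveI := hmm; haveI := hn
    obtain ⟨w, ⟨hw, hwfac⟩, -⟩ :=
      IsStronglyCocartesian.universal_property p f m (𝟙 B) f (by simp) (mm ≫ cW)
    haveI := hw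
    have e1 : w ≫ π₁ = n ≫ π₁ := by
      apply IsStronglyCocartesian.ext p f m (𝟙 B)
      calc m ≫ w ≫ π₁ = (mm ≫ cW) ≫ π₁ := by rw [← Category.assoc, hwfac]
        _ = (mm ≫ π₁') ≫ cE := by rw [Category.assoc, ← wE, Category.assoc]
        _ = ρ₁ ≫ t ≫ vb := by rw [hmm1, Category.assoc, hfac]
        _ = (m ≫ σ₁) ≫ vb := by rw [← Category.assoc, hmσ₁]
        _ = m ≫ n ≫ π₁ := by rw [Category.assoc, ← hn1]
    have e2 : w ≫ π₂ = n ≫ π₂ := by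
      apply IsStronglyCocartesian.ext p f m (𝟙 B)
      calc m ≫ w ≫ π₂ = (mm ≫ cW) ≫ π₂ := by rw [← Category.assoc, hwfac]
        _ = (mm ≫ π₂') ≫ cP := by rw [Category.assoc, ← wP, Category.assoc]
        _ = ρ₂ ≫ cP := by rw [hmm2]
        _ = m ≫ σ₂ := hmσ₂.symm
        _ = m ≫ n ≫ π₂ := by rw [← hn2, Category.assoc]
    obtain ⟨nn, -, hnnuniq⟩ :=
      hExp.fan.universal (n ≫ π₁) (n ≫ π₂) inferInstance inferInstance
    have hwn : w = n := by
      rw [hnnuniq w ⟨hw, e1, e2⟩, hnnuniq n ⟨hn, rfl, rfl⟩]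
    rw [← hwfac, hwn]
  refine ⟨h, ⟨hh, ?_⟩, ?_⟩
  · -- `h` satisfies the evaluation property
    intro mm hmm hmm1 hmm2
    haveI := hmm
    obtain ⟨n, ⟨hn, hn1, hn2⟩, -⟩ :=
      hExp.fan.universal (σ₁ ≫ hb) σ₂ inferInstance inferInstance
    haveI := hn
    have hnev : n ≫ ev = gb := hhbprop n hn hn1 hn2
    have hmain : mm ≫ cW = m ≫ n := key h hb mm n hh hhb hmm hn hhfac hmm1 hmm2 hn1 hn2
    haveI : p.IsHomLift (𝟙 A) (mm ≫ ev') := inferInstance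
    have heq : (mm ≫ ev') ≫ cQ = g ≫ cQ := by
      calc (mm ≫ ev') ≫ cQ = (mm ≫ cW) ≫ ev := by
            rw [Category.assoc, wQ, Category.assoc]
        _ = (m ≫ n) ≫ ev := by rw [hmain]
        _ = m ≫ gb := by rw [Category.assoc, hnev]
        _ = g ≫ cQ := hgbfac
    exact IsStronglyCartesian.ext p f cQ (𝟙 A) heq
  · -- uniqueness of `h`
    intro h' ⟨hh', hprop'⟩
    haveI := hh'
    obtain ⟨vb, ⟨hvb, hvbfac⟩, -⟩ :=
      IsStronglyCocartesian.universal_property p f t (𝟙 B) f (by simp) (h' ≫ cE)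
    haveI := hvb
    have hvbhb : vb = hb := by
      apply hhbuniq
      refine ⟨hvb, ?_⟩
      intro n hn hn1 hn2
      haveI := hn
      obtain ⟨mm', ⟨hmm', hmm'1, hmm'2⟩, -⟩ :=
        fan'.universal (ρ₁ ≫ h') ρ₂ inferInstance inferInstance
      haveI := hmm'
      have hev'g : mm' ≫ ev' = g := hprop' mm' hmm' hmm'1 hmm'2
      have hmain : mm' ≫ cW = m ≫ n :=
        key h' vb mm' n hh' hvb hmm' hn hvbfac.symm hmm'1 hmm'2 hn1 hn2
      apply IsStronglyCocartesian.ext p f m (𝟙 B)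
      calc m ≫ n ≫ ev = (mm' ≫ cW) ≫ ev := by rw [← Category.assoc, ← hmain]
        _ = (mm' ≫ ev') ≫ cQ := by rw [Category.assoc, ← wQ, Category.assoc]
        _ = g ≫ cQ := by rw [hev'g]
        _ = m ≫ gb := hgbfac.symm
    apply IsStronglyCartesian.ext p f cE (𝟙 A)
    rw [hhfac, ← hvbhb]
    exact hvbfac.symm
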